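/- Let ρ be a convex modular on a real vector space X, let (x_n) be a sequence in X_ρ and x ∈ X_ρ. Then ρ(x_n − x) → 0 if and only if for every τ_ρ-open set U ⊆ X_ρ with x ∈ U there exists n₀ such that x_n ∈ U for all n ≥ n₀. -/

import Mathlib

open Filter Topology ENNReal

/-- A convex modular on a real vector space `X`. -/
structure IsConvexModular {X : Type*} [AddCommGroup X] [Module ℝ X] (ρ : X → ℝ≥0∞) : Prop where
  zero_iff : ∀ u : X, ρ u = 0 ↔ u = 0
  neg_eq : ∀ u : X, ρ (-u) = ρ u
  convex : ∀ α : ℝ, 0 ≤ α → α ≤ 1 → ∀ u v : X,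
    ρ (α • u + (1 - α) • v) ≤ ENNReal.ofReal α * ρ u + ENNReal.ofReal (1 - α) * ρ v

/-- `X_ρ`, the modular vector space associated to `ρ`. -/
def modularSet {X : Type*} [AddCommGroup X] [Module ℝ X] (ρ : X → ℝ≥0∞) : Set X :=
  {v : X | ∃ l : ℝ, 0 < l ∧ ρ (l • v) < ⊤}

/-- A set `A ⊆ X_ρ` is `τ_ρ`-open if every point of `A` contains a modular ball around it. -/
def IsTauRhoOpen {X : Type*} [AddCommGroup X] [Module ℝ X] (ρ : X → ℝ≥0∞) (A : Set X) : Prop :=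
  A ⊆ modularSet ρ ∧
    ∀ x ∈ A, ∃ ε : ℝ, 0 < ε ∧ {y ∈ modularSet ρ | ρ (y - x) < ENNReal.ofReal ε} ⊆ A

/- ----------------------------------------------------------------
   Auxiliary material for the proof.
---------------------------------------------------------------- -/

/-- Every positive extended real admits a positive real below it (via `ofReal`). -/
private lemma aux_exists_ofReal_le (a : ℝ≥0∞) (ha : 0 < a) :
    ∃ t : ℝ, 0 < t ∧ ENNReal.ofReal t ≤ a := by
  refine ⟨(min a 1).toReal, ?_, ?_⟩
  · refine ENNReal.toReal_pos ?_ ?_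
    · exact (lt_min ha zero_lt_one).ne'
    · exact ne_top_of_le_ne_top one_ne_top (min_le_right _ _)
  · rw [ENNReal.ofReal_toReal (ne_top_of_le_ne_top one_ne_top (min_le_right _ _))]
    exact min_le_left _ _

/-- An extended real that is `≤` every positive extended real is zero. -/
private lemma aux_eq_zero_of_forall_le (a : ℝ≥0∞) (h : ∀ η : ℝ≥0∞, 0 < η → a ≤ η) :
    a = 0 := by
  by_contra h0
  rcases eq_or_ne a ⊤ with rfl | hne
  · exact absurd (h 1 zero_lt_one) (by simp)
  · exact absurd (h (a / 2) (ENNReal.half_pos h0)) (not_le.mpr (ENNReal.half_lt_self h0 hne))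

/-- There exist arbitrarily small powers of `1/2` (as `ofReal`). -/
private lemma aux_exists_pow_lt (m : ℝ≥0∞) (hm : 0 < m) :
    ∃ j : ℕ, ENNReal.ofReal ((2⁻¹ : ℝ) ^ j) < m := by
  rcases eq_or_ne m ⊤ with rfl | hne
  · exact ⟨0, by simp [ENNReal.ofReal_lt_top]⟩
  · have hpos : 0 < m.toReal := ENNReal.toReal_pos hm.ne' hne
    obtain ⟨j, hj⟩ := exists_pow_lt_of_lt_one hpos (by norm_num : (2⁻¹ : ℝ) < 1)
    refine ⟨j, ?_⟩
    calc ENNReal.ofReal ((2⁻¹ : ℝ) ^ j) < ENNReal.ofReal m.toReal := by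
          exact (ENNReal.ofReal_lt_ofReal_iff hpos).mpr hj
      _ = m := ENNReal.ofReal_toReal hne

/-- Midpoint convexity for a convex modular. -/
private lemma aux_mid {X : Type*} [AddCommGroup X] [Module ℝ X] {ρ : X → ℝ≥0∞}
    (hρ : IsConvexModular ρ) (u v : X) :
    ρ ((2⁻¹ : ℝ) • u + (2⁻¹ : ℝ) • v) ≤
      ENNReal.ofReal 2⁻¹ * ρ u + ENNReal.ofReal 2⁻¹ * ρ v := by
  have h := hρ.convex 2⁻¹ (by norm_num) (by norm_num) u v
  norm_num at h ⊢
  exact h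

/-- Uniqueness of `ρ`-limits for convex modulars. -/
private lemma aux_eq_of_close {X : Type*} [AddCommGroup X] [Module ℝ X] {ρ : X → ℝ≥0∞}
    (hρ : IsConvexModular ρ) (v w : X)
    (h : ∀ η : ℝ≥0∞, 0 < η → ∃ u : X, ρ (u - v) ≤ η ∧ ρ (u - w) ≤ η) : v = w := by
  have key : ∀ η : ℝ≥0∞, 0 < η → ρ ((2⁻¹ : ℝ) • (v - w)) ≤ η := by
    intro η hη
    obtain ⟨u, h1, h2⟩ := h η hη
    have hrw : (2⁻¹ : ℝ) • (v - w) = (2⁻¹ : ℝ) • (u - w) + (2⁻¹ : ℝ) • (v - u) := by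
      rw [← smul_add]; congr 1; abel
    have hvu : ρ (v - u) = ρ (u - v) := by
      rw [show v - u = -(u - v) by abel, hρ.neg_eq]
    calc ρ ((2⁻¹ : ℝ) • (v - w))
        ≤ ENNReal.ofReal 2⁻¹ * ρ (u - w) + ENNReal.ofReal 2⁻¹ * ρ (v - u) := by
          rw [hrw]; exact aux_mid hρ _ _
      _ ≤ ENNReal.ofReal 2⁻¹ * η + ENNReal.ofReal 2⁻¹ * η := by
          have hA : ρ (v - u) ≤ η := by rw [hvu]; exact h1
          gcongr
      _ = (ENNReal.ofReal 2⁻¹ + ENNReal.ofReal 2⁻¹) * η := by ring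
      _ = 1 * η := by
          rw [← ENNReal.ofReal_add (by norm_num) (by norm_num)]
          norm_num
      _ = η := one_mul η
  have h0 : ρ ((2⁻¹ : ℝ) • (v - w)) = 0 := aux_eq_zero_of_forall_le _ key
  have h1 : (2⁻¹ : ℝ) • (v - w) = 0 := (hρ.zero_iff _).mp h0
  have h2 : v - w = 0 := by
    rcases smul_eq_zero.mp h1 with h | h
    · norm_num at h
    · exact h
  exact sub_eq_zero.mp h2

/-- Chain reachability: the smallest set containing `y` and closed under modular
balls of radius `δ v` around each of its points `v`. -/
private inductive ModularReach {X : Type*} [AddCommGroup X] [Module ℝ X]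
    (ρ : X → ℝ≥0∞) (δ : X → ℝ) (y : X) : X → Prop
  | base : ModularReach ρ δ y y
  | step (v u : X) : ModularReach ρ δ y v → u ∈ modularSet ρ →
      ρ (u - v) < ENNReal.ofReal (δ v) → ModularReach ρ δ y u

/-- The chain-reachable set is `τ_ρ`-open. -/
private lemma aux_reach_open {X : Type*} [AddCommGroup X] [Module ℝ X]
    (ρ : X → ℝ≥0∞) (δ : X → ℝ) (y : X) (hy : y ∈ modularSet ρ) (hδ : ∀ v, 0 < δ v) :
    IsTauRhoOpen ρ {u | ModularReach ρ δ y u} := by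
  constructor
  · intro u hu
    induction hu with
    | base => exact hy
    | step v u _ hmem _ => exact hmem
  · intro z hz
    exact ⟨δ z, hδ z, fun u hu => ModularReach.step z u hz hu.1 hu.2⟩

/-- A sequence in `X_ρ` `ρ`-converges to `x ∈ X_ρ` iff it converges to `x` in the
modular topology `τ_ρ`. -/
theorem rho_convergence_iff_tauRho_convergence {X : Type*} [AddCommGroup X] [Module ℝ X]
    (ρ : X → ℝ≥0∞) (hρ : IsConvexModular ρ)
    (x : ℕ → X) (hx : ∀ n, x n ∈ modularSet ρ) (y : X) (hy : y ∈ modularSet ρ) :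
    Tendsto (fun n => ρ (x n - y)) atTop (nhds 0) ↔
      ∀ U : Set X, IsTauRhoOpen ρ U → y ∈ U → ∃ n₀ : ℕ, ∀ n ≥ n₀, x n ∈ U := by
  classical
  constructor
  · -- forward direction
    intro h U hU hyU
    obtain ⟨hUsub, hball⟩ := hU
    obtain ⟨ε, hε, hsub⟩ := hball y hyU
    have hε' : (0 : ℝ≥0∞) < ENNReal.ofReal ε := ENNReal.ofReal_pos.mpr hε
    rw [ENNReal.tendsto_atTop_zero] at h
    obtain ⟨N, hN⟩ := h (ENNReal.ofReal ε / 2) (ENNReal.half_pos hε'.ne')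
    refine ⟨N, fun n hn => hsub ⟨hx n, ?_⟩⟩
    calc ρ (x n - y) ≤ ENNReal.ofReal ε / 2 := hN n hn
      _ < ENNReal.ofReal ε := ENNReal.half_lt_self hε'.ne' ENNReal.ofReal_ne_top
  · -- backward direction, by contradiction
    intro h
    rw [ENNReal.tendsto_atTop_zero]
    by_contra hT
    push_neg at hT
    obtain ⟨ε₀, hε₀, hbad⟩ := hT
    -- `hbad : ∀ N, ∃ n ≥ N, ε₀ < ρ (x n - y)`
    -- bad points are never `y`
    have hbad_ne_y : ∀ n, ε₀ < ρ (x n - y) → x n ≠ y := by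
      intro n hn he
      rw [he, sub_self] at hn
      rw [(hρ.zero_iff 0).mpr rfl] at hn
      exact absurd hn (not_lt.mpr zero_le)
    by_cases hc : ∃ w : X, ∀ t : ℝ, 0 < t →
        ∃ n, ε₀ < ρ (x n - y) ∧ x n ≠ w ∧ ρ (x n - w) < ENNReal.ofReal t
    · -- CASE 1: a cluster point `w` of bad values exists
      obtain ⟨w, hw⟩ := hc
      choose nn hnB hnw hnρ using fun j : ℕ => hw ((2⁻¹ : ℝ) ^ j) (by positivity)
      -- `w ≠ y`
      have hwy : w ≠ y := by
        intro he
        obtain ⟨j, hj⟩ := aux_exists_pow_lt ε₀ hε₀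
        have h1 := hnρ j
        rw [he] at h1
        exact absurd (hnB j) (not_lt.mpr (le_of_lt (lt_trans h1 hj)))
      -- separation of any `v ≠ w` from `w` and from the tail sequence
      have hsep : ∀ v : X, v ≠ w → ∃ t : ℝ, 0 < t ∧
          ENNReal.ofReal t ≤ ρ (w - v) ∧
          ∀ j, x (nn j) ≠ v → ENNReal.ofReal t ≤ ρ (x (nn j) - v) := by
        intro v hv
        have hwv : 0 < ρ (w - v) := by
          rw [pos_iff_ne_zero]
          intro h0
          exact hv ((sub_eq_zero.mp ((hρ.zero_iff _).mp h0)).symm)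
        obtain ⟨t1, ht1, h1⟩ := aux_exists_ofReal_le _ hwv
        by_cases hs : ∃ t : ℝ, 0 < t ∧
            ∀ j, x (nn j) ≠ v → ENNReal.ofReal t ≤ ρ (x (nn j) - v)
        · obtain ⟨t2, ht2, h2⟩ := hs
          refine ⟨min t1 t2, lt_min ht1 ht2, ?_, ?_⟩
          · exact le_trans (ENNReal.ofReal_le_ofReal (min_le_left _ _)) h1
          · exact fun j hj =>
              le_trans (ENNReal.ofReal_le_ofReal (min_le_right _ _)) (h2 j hj)
        · exfalso
          push_neg at hs
          -- `hs : ∀ t, 0 < t → ∃ j, x (nn j) ≠ v ∧ ρ (x (nn j) - v) < ofReal t`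
          -- claim: we may take the witness index arbitrarily large
          have hA : ∀ (M : ℕ) (s : ℝ), 0 < s → ∃ j, M ≤ j ∧ x (nn j) ≠ v ∧
              ρ (x (nn j) - v) < ENNReal.ofReal s := by
            intro M s hs0
            set F := (Finset.range M).filter (fun k => x (nn k) ≠ v) with hF
            have hmpos : 0 < F.inf (fun k => ρ (x (nn k) - v)) := by
              rw [Finset.lt_inf_iff (by simp : (0 : ℝ≥0∞) < ⊤)]
              intro k hk
              rw [pos_iff_ne_zero]
              intro h0
              exact (Finset.mem_filter.mp hk).2 (sub_eq_zero.mp ((hρ.zero_iff _).mp h0))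
            have hmin : 0 < min (F.inf (fun k => ρ (x (nn k) - v))) (ENNReal.ofReal s) :=
              lt_min hmpos (ENNReal.ofReal_pos.mpr hs0)
            obtain ⟨r, hr, hrle⟩ := aux_exists_ofReal_le _ hmin
            obtain ⟨j, hjv, hjlt⟩ := hs r hr
            have hjM : M ≤ j := by
              by_contra hjM
              push_neg at hjM
              have hjF : j ∈ F := Finset.mem_filter.mpr ⟨Finset.mem_range.mpr hjM, hjv⟩
              have : F.inf (fun k => ρ (x (nn k) - v)) ≤ ρ (x (nn j) - v) :=
                Finset.inf_le hjF
              exact absurd (lt_of_lt_of_le hjlt (le_trans hrle (min_le_left _ _)))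
                (not_lt.mpr this)
            exact ⟨j, hjM, hjv,
              lt_of_lt_of_le hjlt (le_trans hrle (min_le_right _ _))⟩
          -- conclude `v = w`, contradiction
          apply hv
          apply aux_eq_of_close hρ v w
          intro η hη
          obtain ⟨M, hM⟩ := aux_exists_pow_lt η hη
          obtain ⟨r, hr, hrη⟩ := aux_exists_ofReal_le η hη
          obtain ⟨j, hjM, hjv, hjlt⟩ := hA M r hr
          refine ⟨x (nn j), ?_, ?_⟩
          · have : ρ (x (nn j) - v) < ENNReal.ofReal r := hjlt
            exact le_trans this.le hrη
          · have hj1 : ρ (x (nn j) - w) < ENNReal.ofReal ((2⁻¹ : ℝ) ^ j) := hnρ j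
            have hj2 : ((2⁻¹ : ℝ) ^ j) ≤ ((2⁻¹ : ℝ) ^ M) :=
              pow_le_pow_of_le_one (by norm_num) (by norm_num) hjM
            exact le_of_lt (lt_of_lt_of_le hj1
              (le_trans (ENNReal.ofReal_le_ofReal hj2) hM.le))
      -- the radius function
      let δ : X → ℝ := fun v => if hv : v = w then 1 else (hsep v hv).choose
      have hδpos : ∀ v, 0 < δ v := by
        intro v
        by_cases hv : v = w
        · have h1 : δ v = 1 := dif_pos hv
          rw [h1]; norm_num
        · have h1 : δ v = (hsep v hv).choose := dif_neg hv
          rw [h1]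
          exact (hsep v hv).choose_spec.1
      -- invariant: reachable points avoid `w` and the whole tail sequence
      have hinv : ∀ u, ModularReach ρ δ y u → u ≠ w ∧ ∀ j, u ≠ x (nn j) := by
        intro u hu
        induction hu with
        | base =>
          refine ⟨Ne.symm hwy, fun j he => ?_⟩
          exact hbad_ne_y (nn j) (hnB j) he.symm
        | step v u hv hmem hlt ih =>
          have hvw : v ≠ w := ih.1
          have hδv : δ v = (hsep v hvw).choose := dif_neg hvw
          have hspec := (hsep v hvw).choose_spec
          constructor
          · intro he
            rw [he, hδv] at hlt
            exact absurd hlt (not_lt.mpr hspec.2.1)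
          · intro j he
            have hne : x (nn j) ≠ v := fun h => (ih.2 j) h.symm
            rw [he, hδv] at hlt
            exact absurd hlt (not_lt.mpr (hspec.2.2 j hne))
      -- indices `nn j` are unbounded
      have hnn : ∀ N : ℕ, ∃ j, N ≤ nn j := by
        intro N
        by_contra hcon
        push_neg at hcon
        set F := (Finset.range N).filter (fun k => x k ≠ w) with hF
        have hmpos : 0 < F.inf (fun k => ρ (x k - w)) := by
          rw [Finset.lt_inf_iff (by simp : (0 : ℝ≥0∞) < ⊤)]
          intro k hk
          rw [pos_iff_ne_zero]
          intro h0
          exact (Finset.mem_filter.mp hk).2 (sub_eq_zero.mp ((hρ.zero_iff _).mp h0))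
        obtain ⟨j, hj⟩ := aux_exists_pow_lt _ hmpos
        have hjF : nn j ∈ F :=
          Finset.mem_filter.mpr ⟨Finset.mem_range.mpr (hcon j), hnw j⟩
        have hle : F.inf (fun k => ρ (x k - w)) ≤ ρ (x (nn j) - w) := Finset.inf_le hjF
        exact absurd (lt_trans (hnρ j) hj) (not_lt.mpr hle)
      -- contradiction
      obtain ⟨n₀, hn₀⟩ := h {u | ModularReach ρ δ y u}
        (aux_reach_open ρ δ y hy hδpos) ModularReach.base
      obtain ⟨j, hj⟩ := hnn n₀
      exact (hinv _ (hn₀ (nn j) hj)).2 j rfl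
    · -- CASE 2: no cluster point; all bad values are uniformly separated
      push_neg at hc
      -- `hc : ∀ w, ∃ t, 0 < t ∧ ∀ n, ε₀ < ρ (x n - y) → x n ≠ w → ofReal t ≤ ρ (x n - w)`
      have hc' : ∀ w : X, ∃ t : ℝ, 0 < t ∧
          ∀ n, ε₀ < ρ (x n - y) → x n ≠ w → ENNReal.ofReal t ≤ ρ (x n - w) := by
        intro w
        obtain ⟨t, ht, hts⟩ := hc w
        exact ⟨t, ht, fun n h1 h2 => hts n h1 h2⟩
      let δ : X → ℝ := fun v => (hc' v).choose
      have hδpos : ∀ v, 0 < δ v := fun v => (hc' v).choose_spec.1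
      have hinv : ∀ u, ModularReach ρ δ y u →
          ∀ n, ε₀ < ρ (x n - y) → u ≠ x n := by
        intro u hu
        induction hu with
        | base => exact fun n hn he => hbad_ne_y n hn he.symm
        | step v u hv hmem hlt ih =>
          intro n hn he
          have hne : x n ≠ v := fun h => (ih n hn) h.symm
          have hspec := (hc' v).choose_spec.2 n hn hne
          rw [he] at hlt
          exact absurd hlt (not_lt.mpr hspec)
      obtain ⟨n₀, hn₀⟩ := h {u | ModularReach ρ δ y u}
        (aux_reach_open ρ δ y hy hδpos) ModularReach.base
      obtain ⟨n, hn, hbn⟩ := hbad n₀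
      exact hinv _ (hn₀ n hn) n hbn rfl
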